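/- Let f : ℝ → ℝ be convex, x ∈ ℝ, ε > 0, and ξ ≥ 0. If f(x + ε) ≥ f(x) − ξ and f(x − ε) ≥ f(x) − ξ, then for every y ∈ ℝ with |y − x| ≥ ε one has f(y) ≥ f(x) − (|y − x|/ε)·ξ. In particular, an (ε,ξ)-approximate coordinate minimum of a convex function is globally near-optimal along that coordinate up to error proportional to ξ/ε, which drives the convergence of the stagewise solution to a coordinate-wise minimum as ε, ξ → 0 (Theorem 1 ingredient). -/

import Mathlib

/-- an (ε,ξ)-approximate coordinate minimum of a convex function
on ℝ is globally near-optimal: `f y ≥ f x − (|y−x|/ε)·ξ` whenever `|y−x| ≥ ε`. -/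
theorem stmt_15 (f : ℝ → ℝ) (hf : ConvexOn ℝ Set.univ f)
    (x ε ξ : ℝ) (hε : 0 < ε) (hξ : 0 ≤ ξ)
    (h1 : f x - ξ ≤ f (x + ε)) (h2 : f x - ξ ≤ f (x - ε)) :
    ∀ y : ℝ, ε ≤ |y - x| → f x - (|y - x| / ε) * ξ ≤ f y := by
  intro y hy
  have hd : (0:ℝ) < |y - x| := lt_of_lt_of_le hε hy
  set d := |y - x| with hddef
  have hdne : d ≠ 0 := ne_of_gt hd
  have ht0 : 0 < ε / d := div_pos hε hd
  have ht1 : ε / d ≤ 1 := (div_le_one hd).mpr hy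
  have hconv := hf.2 (Set.mem_univ x) (Set.mem_univ y)
    (show (0:ℝ) ≤ 1 - ε/d by linarith) (le_of_lt ht0)
    (show (1 - ε/d) + ε/d = 1 by ring)
  have key : f x - ξ ≤ (1 - ε/d) * f x + (ε/d) * f y := by
    rcases abs_cases (y - x) with ⟨h, hyx⟩ | ⟨h, hyx⟩
    · have hpt : (1 - ε/d) • x + (ε/d) • y = x + ε := by
        simp only [smul_eq_mul]
        have hpos : (0:ℝ) < y - x := by rw [hddef, h] at hd; exact hd
        have : d = y - x := by rw [hddef, h]
        field_simp [this, ne_of_gt hpos]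
        rw [this]; ring
      rw [hpt] at hconv
      simp only [smul_eq_mul] at hconv
      linarith
    · have hpt : (1 - ε/d) • x + (ε/d) • y = x - ε := by
        simp only [smul_eq_mul]
        have hpos : (0:ℝ) < x - y := by rw [hddef, h] at hd; linarith
        have : d = x - y := by rw [hddef, h]; ring
        field_simp [this, ne_of_gt hpos]
        rw [this]; ring
      rw [hpt] at hconv
      simp only [smul_eq_mul] at hconv
      linarith
  have h5 : -ξ ≤ (ε/d) * (f y - f x) := by nlinarith [key]
  have h6 := mul_le_mul_of_nonneg_left h5 (le_of_lt (div_pos hd hε))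
  have h7 : (d/ε) * ((ε/d) * (f y - f x)) = f y - f x := by
    field_simp
  rw [h7] at h6
  have : (d/ε) * (-ξ) = -((d/ε) * ξ) := by ring
  linarith [h6, this.symm ▸ h6]
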